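/- Let G be a simple graph on n ≥ 1 vertices with m edges and clique number ω = ω(G). For k = 1,…,m let E_k = (1/2)E_{i_k j_k} + (1/2)E_{j_k i_k}, where {i_k, j_k} is the k-th edge of G and E_{ij} is the n×n matrix with a 1 in entry (i,j) and zeroes elsewhere. For a positive integer ℓ define M_ℓ := max_{‖u‖₂ = 1} { Σ_{i=1}^{ℓ} (u^T (ℓ^{−1} I) u)² + Σ_{k=1}^{m} (u^T E_k u)² + Σ_{k=1}^{m} (u^T E_k u)² }, the maximum taken over unit vectors u ∈ ℝ^n. Then M_ℓ = 1 + (ω − ℓ)/(ℓω). -/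

import Mathlib

open Matrix

noncomputable def Bq {n : ℕ} (A : Fin n → Fin n → ℝ) (x y : Fin n → ℝ) : ℝ :=
  ∑ p, ∑ q, A p q * x p * y q

noncomputable def Aof {n : ℕ} (G : SimpleGraph (Fin n)) [DecidableRel G.Adj] :
    Fin n → Fin n → ℝ := fun p q => if G.Adj p q then 1 else 0

lemma Bq_add_left {n : ℕ} (A : Fin n → Fin n → ℝ) (x y z : Fin n → ℝ) :
    Bq A (x + y) z = Bq A x z + Bq A y z := by
  simp [Bq, mul_add, add_mul, Finset.sum_add_distrib]

lemma Bq_add_right {n : ℕ} (A : Fin n → Fin n → ℝ) (x y z : Fin n → ℝ) :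
    Bq A x (y + z) = Bq A x y + Bq A x z := by
  simp [Bq, mul_add, Finset.sum_add_distrib]

lemma Bq_smul_left {n : ℕ} (A : Fin n → Fin n → ℝ) (c : ℝ) (x y : Fin n → ℝ) :
    Bq A (c • x) y = c * Bq A x y := by
  simp only [Bq, Pi.smul_apply, smul_eq_mul, Finset.mul_sum]
  exact Finset.sum_congr rfl fun p _ => Finset.sum_congr rfl fun q _ => by ring

lemma Bq_smul_right {n : ℕ} (A : Fin n → Fin n → ℝ) (c : ℝ) (x y : Fin n → ℝ) :
    Bq A x (c • y) = c * Bq A x y := by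
  simp only [Bq, Pi.smul_apply, smul_eq_mul, Finset.mul_sum]
  exact Finset.sum_congr rfl fun p _ => Finset.sum_congr rfl fun q _ => by ring

lemma Bq_sub_left {n : ℕ} (A : Fin n → Fin n → ℝ) (x y z : Fin n → ℝ) :
    Bq A (x - y) z = Bq A x z - Bq A y z := by
  simp [Bq, sub_mul, mul_sub, Finset.sum_sub_distrib]

lemma Bq_sub_right {n : ℕ} (A : Fin n → Fin n → ℝ) (x y z : Fin n → ℝ) :
    Bq A x (y - z) = Bq A x y - Bq A x z := by
  simp [Bq, mul_sub, Finset.sum_sub_distrib]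

lemma Bq_single_right {n : ℕ} (A : Fin n → Fin n → ℝ) (x : Fin n → ℝ) (t : Fin n) :
    Bq A x (Pi.single t 1) = ∑ p, A p t * x p := by
  simp [Bq, Pi.single_apply, mul_ite, Finset.sum_ite_eq']

lemma Bq_single_left {n : ℕ} (A : Fin n → Fin n → ℝ) (y : Fin n → ℝ) (t : Fin n) :
    Bq A (Pi.single t 1) y = ∑ q, A t q * y q := by
  rw [Bq, Finset.sum_comm]
  simp [Pi.single_apply, mul_ite, ite_mul, Finset.sum_ite_eq']

lemma Bq_single_single {n : ℕ} (A : Fin n → Fin n → ℝ) (s t : Fin n) :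
    Bq A (Pi.single s 1) (Pi.single t 1) = A s t := by
  rw [Bq_single_left]
  simp [Pi.single_apply, mul_ite, Finset.sum_ite_eq']

lemma Aof_symm {n : ℕ} (G : SimpleGraph (Fin n)) [DecidableRel G.Adj] (p q : Fin n) :
    Aof G p q = Aof G q p := by
  simp [Aof, G.adj_comm]

lemma ms_step {n : ℕ} (G : SimpleGraph (Fin n)) [DecidableRel G.Adj]
    (x : Fin n → ℝ) (hx0 : ∀ i, 0 ≤ x i)
    (i j : Fin n) (hij : i ≠ j) (hnadj : ¬ G.Adj i j) (hxj : x j ≠ 0)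
    (hfi : ∑ r, Aof G i r * x r ≤ ∑ r, Aof G j r * x r) :
    ∃ x' : Fin n → ℝ, (∀ p, 0 ≤ x' p) ∧ (∑ p, x' p = ∑ p, x p) ∧
      Bq (Aof G) x x ≤ Bq (Aof G) x' x' ∧
      Finset.univ.filter (fun p => x' p ≠ 0) ⊆
        (Finset.univ.filter (fun p => x p ≠ 0)).erase i := by
  set A := Aof G with hA
  set d : Fin n → ℝ := Pi.single j 1 - Pi.single i 1 with hd
  refine ⟨x + x i • d, ?_, ?_, ?_, ?_⟩
  · intro p
    by_cases hpi : p = i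
    · subst hpi
      simp [hd, Pi.single_apply, hij.symm]
    · by_cases hpj : p = j
      · rw [hpj]
        simp only [Pi.add_apply, hd, Pi.smul_apply, Pi.sub_apply, Pi.single_apply,
          if_pos rfl, if_neg (Ne.symm hij), smul_eq_mul]
        norm_num
        have := hx0 i; have := hx0 j; nlinarith
      · simp [hd, Pi.single_apply, hpi, hpj]
        exact hx0 p
  · have h1 : ∑ p, d p = 0 := by
      simp [hd, Finset.sum_sub_distrib]
    simp [Finset.sum_add_distrib, ← Finset.mul_sum, h1]
  · have hAii : A i i = 0 := by simp [hA, Aof]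
    have hAjj : A j j = 0 := by simp [hA, Aof]
    have hAij : A i j = 0 := by simp [hA, Aof, hnadj]
    have hAji : A j i = 0 := by rw [hA, Aof_symm]; exact hAij
    have hBdd : Bq A d d = 0 := by
      simp [hd, Bq_sub_left, Bq_sub_right, Bq_single_single, hAii, hAjj, hAij, hAji]
    have hBxd : Bq A x d = (∑ r, A j r * x r) - (∑ r, A i r * x r) := by
      rw [hd, Bq_sub_right, Bq_single_right, Bq_single_right]
      congr 1
      · exact Finset.sum_congr rfl fun r _ => by rw [hA, Aof_symm]
      · exact Finset.sum_congr rfl fun r _ => by rw [hA, Aof_symm]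
    have hBdx : Bq A d x = (∑ r, A j r * x r) - (∑ r, A i r * x r) := by
      rw [hd, Bq_sub_left, Bq_single_left, Bq_single_left]
    have expand : Bq A (x + x i • d) (x + x i • d)
        = Bq A x x + x i * Bq A x d + x i * Bq A d x + x i ^ 2 * Bq A d d := by
      rw [Bq_add_left, Bq_add_right, Bq_add_right, Bq_smul_left, Bq_smul_right,
        Bq_smul_left, Bq_smul_right]
      ring
    rw [expand, hBdd, hBxd, hBdx]
    have := hx0 i
    nlinarith
  · intro p hp
    simp only [Finset.mem_filter, Finset.mem_univ, true_and] at hp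
    by_cases hpi : p = i
    · exfalso
      apply hp
      subst hpi
      simp [hd, Pi.single_apply, hij.symm]
    · rw [Finset.mem_erase]
      refine ⟨hpi, ?_⟩
      simp only [Finset.mem_filter, Finset.mem_univ, true_and]
      by_cases hpj : p = j
      · subst hpj; exact hxj
      · intro h
        apply hp
        simp [hd, Pi.single_apply, hpi, hpj, h]


lemma Bq_le {n : ℕ} (G : SimpleGraph (Fin n)) [DecidableRel G.Adj] (x : Fin n → ℝ)
    (hx0 : ∀ i, 0 ≤ x i) (hx1 : ∑ i, x i = 1) :
    Bq (Aof G) x x ≤ 1 - ∑ i, x i ^ 2 := by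
  have h1 : Bq (Aof G) x x ≤ ∑ p, ∑ q, (if p = q then 0 else x p * x q) := by
    refine Finset.sum_le_sum fun p _ => Finset.sum_le_sum fun q _ => ?_
    by_cases h : G.Adj p q
    · simp [Bq, Aof, h, h.ne]
    · have : (0:ℝ) ≤ x p * x q := mul_nonneg (hx0 p) (hx0 q)
      by_cases hpq : p = q <;> simp [Aof, h, hpq] <;> positivity
  refine h1.trans (le_of_eq ?_)
  have key : ∀ p : Fin n, ∑ q, (if p = q then 0 else x p * x q)
      = (∑ q, x p * x q) - x p ^ 2 := by
    intro p
    have : ∀ q : Fin n, (if p = q then 0 else x p * x q)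
        = x p * x q - (if p = q then x p * x q else 0) := by
      intro q; split <;> ring
    rw [Finset.sum_congr rfl fun q _ => this q, Finset.sum_sub_distrib,
      Finset.sum_ite_eq]
    simp [pow_two]
  rw [Finset.sum_congr rfl fun p _ => key p, Finset.sum_sub_distrib]
  have : ∀ p : Fin n, ∑ q, x p * x q = x p := by
    intro p; rw [← Finset.mul_sum, hx1, mul_one]
  rw [Finset.sum_congr rfl fun p _ => this p, hx1]

lemma ms_main {n : ℕ} (G : SimpleGraph (Fin n)) [DecidableRel G.Adj] :
    ∀ N (x : Fin n → ℝ), (Finset.univ.filter (fun i => x i ≠ 0)).card ≤ N →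
      (∀ i, 0 ≤ x i) → ∑ i, x i = 1 →
      Bq (Aof G) x x ≤ 1 - (G.cliqueNum : ℝ)⁻¹ := by
  intro N
  induction N with
  | zero =>
    intro x hcard hx0 hx1
    exfalso
    have : ∀ i, x i = 0 := by
      intro i
      by_contra h
      have : i ∈ Finset.univ.filter (fun i => x i ≠ 0) := by simp [h]
      have := Finset.card_pos.mpr ⟨i, this⟩
      omega
    simp [this] at hx1
  | succ N ih =>
    intro x hcard hx0 hx1
    set S := Finset.univ.filter (fun i => x i ≠ 0) with hSdef
    by_cases hc : ∀ p ∈ S, ∀ q ∈ S, p ≠ q → G.Adj p q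
    · -- clique case
      have hSclique : G.IsClique (S : Set (Fin n)) := by
        intro p hp q hq hpq
        exact hc p (by simpa using hp) q (by simpa using hq) hpq
      have hScard : S.card ≤ G.cliqueNum := hSclique.card_le_cliqueNum
      have hSsum : ∑ i ∈ S, x i = 1 := by
        rw [hSdef, Finset.sum_filter_ne_zero]
        exact hx1
      have hSne : 0 < S.card := by
        rcases Finset.eq_empty_or_nonempty S with h | h
        · rw [h] at hSsum; simp at hSsum
        · exact Finset.card_pos.mpr h
      have hCS : (1:ℝ) ≤ S.card * ∑ i ∈ S, x i ^ 2 := by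
        have := sq_sum_le_card_mul_sum_sq (s := S) (f := x)
        rw [hSsum] at this
        simpa using this
      have hsq : (S.card : ℝ)⁻¹ ≤ ∑ i ∈ S, x i ^ 2 := by
        rw [inv_le_iff_one_le_mul₀ (by positivity)]
        linarith [hCS]
      have hsub : ∑ i ∈ S, x i ^ 2 ≤ ∑ i, x i ^ 2 :=
        Finset.sum_le_sum_of_subset_of_nonneg (Finset.subset_univ S)
          (fun i _ _ => by positivity)
      have hinv : (G.cliqueNum : ℝ)⁻¹ ≤ (S.card : ℝ)⁻¹ := by
        apply inv_anti₀ (by exact_mod_cast hSne) (by exact_mod_cast hScard)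
      have := Bq_le G x hx0 hx1
      linarith
    · -- non-clique case: shift mass
      push_neg at hc
      obtain ⟨p, hp, q, hq, hpq, hnadj⟩ := hc
      have hxp : x p ≠ 0 := by simpa [hSdef] using hp
      have hxq : x q ≠ 0 := by simpa [hSdef] using hq
      have key : ∃ x' : Fin n → ℝ, (∀ r, 0 ≤ x' r) ∧ (∑ r, x' r = ∑ r, x r) ∧
          Bq (Aof G) x x ≤ Bq (Aof G) x' x' ∧ ∃ i0 ∈ S,
          Finset.univ.filter (fun r => x' r ≠ 0) ⊆ S.erase i0 := by
        rcases le_total (∑ r, Aof G p r * x r) (∑ r, Aof G q r * x r) with h | h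
        · obtain ⟨x', h0, hsum, hle, hsub⟩ := ms_step G x hx0 p q hpq hnadj hxq h
          exact ⟨x', h0, hsum, hle, p, hp, hsub⟩
        · obtain ⟨x', h0, hsum, hle, hsub⟩ := ms_step G x hx0 q p hpq.symm
            (fun h' => hnadj h'.symm) hxp h
          exact ⟨x', h0, hsum, hle, q, hq, hsub⟩
      obtain ⟨x', h0, hsum, hle, i0, hi0, hsub⟩ := key
      have hcard' : (Finset.univ.filter (fun r => x' r ≠ 0)).card ≤ N := by
        have h1 := Finset.card_le_card hsub
        have h2 := Finset.card_erase_of_mem hi0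
        omega
      exact hle.trans (ih x' hcard' h0 (by rw [hsum]; exact hx1))

lemma bridge {n m : ℕ} (G : SimpleGraph (Fin n)) [DecidableRel G.Adj]
    (a b : Fin m → Fin n)
    (hab : ∀ k, G.Adj (a k) (b k))
    (hinj : Function.Injective fun k => s(a k, b k))
    (hsurj : ∀ e ∈ G.edgeFinset, ∃ k, s(a k, b k) = e)
    (x : Fin n → ℝ) :
    Bq (Aof G) x x = 2 * ∑ k, x (a k) * x (b k) := by
  have step1 : Bq (Aof G) x x
      = ∑ pq ∈ (Finset.univ ×ˢ Finset.univ).filter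
          (fun pq : Fin n × Fin n => G.Adj pq.1 pq.2), x pq.1 * x pq.2 := by
    rw [Bq, ← Finset.sum_product', Finset.sum_filter]
    refine Finset.sum_congr rfl fun pq _ => ?_
    by_cases h : G.Adj pq.1 pq.2 <;> simp [Aof, h]
  have step2 : ∑ ko : Fin m × Bool, x (a ko.1) * x (b ko.1)
      = ∑ pq ∈ (Finset.univ ×ˢ Finset.univ).filter
          (fun pq : Fin n × Fin n => G.Adj pq.1 pq.2), x pq.1 * x pq.2 := by
    refine Finset.sum_bij
      (fun (ko : Fin m × Bool) _ =>
        if ko.2 then (b ko.1, a ko.1) else (a ko.1, b ko.1)) ?_ ?_ ?_ ?_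
    · rintro ⟨k, o⟩ -
      cases o <;> simp [Finset.mem_filter, hab k, (hab k).symm]
    · intro ko _ ko' _ h
      obtain ⟨k, o⟩ := ko
      obtain ⟨k', o'⟩ := ko'
      revert h
      cases o <;> cases o' <;> intro h <;>
        simp only [if_true, if_false, Prod.mk.injEq, Bool.false_eq_true,
          Bool.true_eq_false] at h <;>
        obtain ⟨h1, h2⟩ := h
      · have hk : k = k' := hinj (show s(a k, b k) = s(a k', b k') by rw [h1, h2])
        rw [hk]
      · exfalso
        have hk : k = k' := hinj (show s(a k, b k) = s(a k', b k') by
          rw [h1, h2]; exact Sym2.eq_swap)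
        subst hk; exact (hab k).ne h1
      · exfalso
        have hk : k = k' := hinj (show s(a k, b k) = s(a k', b k') by
          rw [h2, h1]; exact Sym2.eq_swap)
        subst hk; exact (hab k).ne h2
      · have hk : k = k' := hinj (show s(a k, b k) = s(a k', b k') by rw [h2, h1])
        rw [hk]
    · rintro ⟨p, q⟩ hpq
      rw [Finset.mem_filter] at hpq
      have hadj : G.Adj p q := hpq.2
      obtain ⟨k, hk⟩ := hsurj s(p, q)
        (SimpleGraph.mem_edgeFinset.mpr (G.mem_edgeSet.mpr hadj))
      rw [Sym2.eq_iff] at hk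
      rcases hk with ⟨h1, h2⟩ | ⟨h1, h2⟩
      · exact ⟨(k, false), Finset.mem_univ _, by simp [h1, h2]⟩
      · exact ⟨(k, true), Finset.mem_univ _, by simp [h1, h2]⟩
    · rintro ⟨k, o⟩ -
      cases o <;> simp [mul_comm]
  have step3 : ∑ ko : Fin m × Bool, x (a ko.1) * x (b ko.1)
      = 2 * ∑ k, x (a k) * x (b k) := by
    rw [Fintype.sum_prod_type]
    simp only [Finset.sum_const, Finset.card_univ, Fintype.card_bool]
    rw [Finset.mul_sum]
    refine Finset.sum_congr rfl fun k _ => ?_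
    simp [two_mul]
  rw [step1, ← step2, step3]

lemma dot_std {n : ℕ} (p q : Fin n) (u : Fin n → ℝ) :
    u ⬝ᵥ (Matrix.single p q (1:ℝ)).mulVec u = u p * u q := by
  simp only [dotProduct, Matrix.mulVec, Matrix.single, Matrix.of_apply,
    ite_mul, mul_ite, zero_mul, mul_zero, one_mul, mul_one, Finset.mul_sum, Finset.sum_ite_eq,
    Finset.sum_ite_eq', Finset.mem_univ, if_true]
  have : ∀ i : Fin n, (∑ j, if p = i ∧ q = j then u i * u j else 0)
      = if p = i then u i * u q else 0 := by
    intro i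
    by_cases hp : p = i
    · simp [hp, Finset.sum_ite_eq]
    · simp [hp]
  rw [Finset.sum_congr rfl fun i _ => this i]
  simp [Finset.sum_ite_eq]

lemma dot_id {n ℓ : ℕ} (u : Fin n → ℝ) :
    u ⬝ᵥ ((ℓ : ℝ)⁻¹ • (1 : Matrix (Fin n) (Fin n) ℝ)).mulVec u
      = (ℓ : ℝ)⁻¹ * ∑ i, u i ^ 2 := by
  rw [Matrix.smul_mulVec, Matrix.one_mulVec, dotProduct_smul]
  simp [dotProduct, pow_two, Finset.mul_sum]


lemma Bq_clique_vec {n : ℕ} (G : SimpleGraph (Fin n)) [DecidableRel G.Adj]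
    (S : Finset (Fin n)) (hS : G.IsNClique G.cliqueNum S) (hω1 : 1 ≤ G.cliqueNum) :
    Bq (Aof G) (fun i => if i ∈ S then (G.cliqueNum : ℝ)⁻¹ else 0)
      (fun i => if i ∈ S then (G.cliqueNum : ℝ)⁻¹ else 0)
      = 1 - (G.cliqueNum : ℝ)⁻¹ := by
  set w := (G.cliqueNum : ℝ)⁻¹ with hw
  have hω0 : (0:ℝ) < (G.cliqueNum : ℝ) := by exact_mod_cast hω1
  have key : ∀ p q : Fin n,
      Aof G p q * (if p ∈ S then w else 0) * (if q ∈ S then w else 0)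
      = if p ∈ S then (if q ∈ S.erase p then w * w else 0) else 0 := by
    intro p q
    by_cases hp : p ∈ S
    · by_cases hq : q ∈ S
      · by_cases hpq : p = q
        · subst hpq
          simp [Aof, Finset.mem_erase, hp]
        · have hadj : G.Adj p q := hS.isClique (by simpa using hp) (by simpa using hq) hpq
          simp [Aof, hadj, hp, hq, Finset.mem_erase, Ne.symm hpq]
          try ring
      · have : q ∉ S.erase p := fun h => hq (Finset.mem_of_mem_erase h)
        simp [hq, this, hp]
    · simp [hp]
  rw [Bq, Finset.sum_congr rfl fun p _ => Finset.sum_congr rfl fun q _ => key p q]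
  have inner : ∀ p : Fin n, (∑ q, if q ∈ S.erase p then w * w else 0)
      = ((S.erase p).card : ℝ) * (w * w) := by
    intro p
    rw [Finset.sum_ite_mem, Finset.univ_inter, Finset.sum_const, nsmul_eq_mul]
  have step : ∀ p : Fin n,
      (∑ q, if p ∈ S then (if q ∈ S.erase p then w * w else 0) else 0)
      = if p ∈ S then ((G.cliqueNum : ℝ) - 1) * (w * w) else 0 := by
    intro p
    by_cases hp : p ∈ S
    · simp only [hp, if_true]
      rw [inner p, Finset.card_erase_of_mem hp, hS.card_eq]
      rw [Nat.cast_sub hω1]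
      norm_num
    · simp [hp]
  rw [Finset.sum_congr rfl fun p _ => step p]
  rw [Finset.sum_ite_mem, Finset.univ_inter, Finset.sum_const, nsmul_eq_mul, hS.card_eq]
  rw [hw]
  field_simp


/-- `M_ℓ = 1 + (ω − ℓ)/(ℓω)`.  Here `a k, b k` are the endpoints of
the `k`-th edge of `G` (the map `k ↦ {a k, b k}` enumerates the edge set), and
`E k = (1/2)E_{a_k b_k} + (1/2)E_{b_k a_k}`. -/
theorem stmt_6 (n m : ℕ) (hn : 1 ≤ n) (G : SimpleGraph (Fin n)) [DecidableRel G.Adj]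
    (a b : Fin m → Fin n)
    (hab : ∀ k, G.Adj (a k) (b k))
    (hinj : Function.Injective fun k => s(a k, b k))
    (hsurj : ∀ e ∈ G.edgeFinset, ∃ k, s(a k, b k) = e)
    (E : Fin m → Matrix (Fin n) (Fin n) ℝ)
    (hE : ∀ k, E k = (1/2 : ℝ) • Matrix.single (a k) (b k) 1
                   + (1/2 : ℝ) • Matrix.single (b k) (a k) 1)
    (ℓ : ℕ) (hℓ : 0 < ℓ) :
    IsGreatest
      {y : ℝ | ∃ u : Fin n → ℝ, (∑ i, u i ^ 2) = 1 ∧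
        y = (∑ _i : Fin ℓ,
              (u ⬝ᵥ ((ℓ : ℝ)⁻¹ • (1 : Matrix (Fin n) (Fin n) ℝ)).mulVec u) ^ 2)
          + (∑ k, (u ⬝ᵥ (E k).mulVec u) ^ 2)
          + (∑ k, (u ⬝ᵥ (E k).mulVec u) ^ 2)}
      (1 + ((G.cliqueNum : ℝ) - (ℓ : ℝ)) / ((ℓ : ℝ) * (G.cliqueNum : ℝ))) := by
  have hω1 : 1 ≤ G.cliqueNum := by
    have hcl : G.IsClique (({⟨0, hn⟩} : Finset (Fin n)) : Set (Fin n)) := by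
      simp [SimpleGraph.isClique_iff, Set.Pairwise]
    have := hcl.card_le_cliqueNum
    simpa using this
  have hω0 : (0:ℝ) < (G.cliqueNum : ℝ) := by exact_mod_cast hω1
  have hℓ0 : (0:ℝ) < (ℓ : ℝ) := by exact_mod_cast hℓ
  have hval : ∀ u : Fin n → ℝ, (∑ i, u i ^ 2) = 1 →
      (∑ _i : Fin ℓ,
          (u ⬝ᵥ ((ℓ : ℝ)⁻¹ • (1 : Matrix (Fin n) (Fin n) ℝ)).mulVec u) ^ 2)
        + (∑ k, (u ⬝ᵥ (E k).mulVec u) ^ 2) + (∑ k, (u ⬝ᵥ (E k).mulVec u) ^ 2)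
      = (ℓ:ℝ)⁻¹ + Bq (Aof G) (fun i => u i ^ 2) (fun i => u i ^ 2) := by
    intro u hu
    have h1 : ∀ k, u ⬝ᵥ (E k).mulVec u = u (a k) * u (b k) := by
      intro k
      rw [hE k, Matrix.add_mulVec, dotProduct_add, Matrix.smul_mulVec,
        Matrix.smul_mulVec, dotProduct_smul, dotProduct_smul,
        dot_std, dot_std]
      simp only [smul_eq_mul]
      ring
    have h2 : ∑ k, (u ⬝ᵥ (E k).mulVec u) ^ 2 = ∑ k, (u (a k)) ^ 2 * (u (b k)) ^ 2 :=
      Finset.sum_congr rfl fun k _ => by rw [h1 k]; ring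
    have h3 : (∑ _i : Fin ℓ,
        (u ⬝ᵥ ((ℓ : ℝ)⁻¹ • (1 : Matrix (Fin n) (Fin n) ℝ)).mulVec u) ^ 2) = (ℓ:ℝ)⁻¹ := by
      have : ∀ _i : Fin ℓ,
          (u ⬝ᵥ ((ℓ : ℝ)⁻¹ • (1 : Matrix (Fin n) (Fin n) ℝ)).mulVec u) ^ 2
          = ((ℓ:ℝ)⁻¹) ^ 2 := by
        intro _i
        rw [dot_id, hu, mul_one]
      rw [Finset.sum_congr rfl fun i _ => this i, Finset.sum_const, Finset.card_univ,
        Fintype.card_fin, nsmul_eq_mul]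
      field_simp
    rw [h2, h3, bridge G a b hab hinj hsurj (fun i => u i ^ 2)]
    ring
  have harith : (ℓ:ℝ)⁻¹ + (1 - (G.cliqueNum : ℝ)⁻¹)
      = 1 + ((G.cliqueNum : ℝ) - (ℓ : ℝ)) / ((ℓ : ℝ) * (G.cliqueNum : ℝ)) := by
    field_simp
    ring
  constructor
  · -- membership
    obtain ⟨S, hS⟩ := G.exists_isNClique_cliqueNum
    set c := (Real.sqrt (G.cliqueNum : ℝ))⁻¹ with hc
    have hc2 : c ^ 2 = (G.cliqueNum : ℝ)⁻¹ := by
      rw [hc, inv_pow, Real.sq_sqrt hω0.le]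
    refine ⟨fun i => if i ∈ S then c else 0, ?_, ?_⟩
    · have : ∀ i : Fin n, (if i ∈ S then c else 0) ^ 2
          = if i ∈ S then (G.cliqueNum : ℝ)⁻¹ else 0 := by
        intro i
        by_cases hi : i ∈ S <;> simp [hi, hc2]
      rw [Finset.sum_congr rfl fun i _ => this i, Finset.sum_ite_mem,
        Finset.univ_inter, Finset.sum_const, nsmul_eq_mul, hS.card_eq]
      field_simp
    · have hu : (∑ i, (if i ∈ S then c else 0) ^ 2) = 1 := by
        have : ∀ i : Fin n, (if i ∈ S then c else 0) ^ 2
            = if i ∈ S then (G.cliqueNum : ℝ)⁻¹ else 0 := by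
          intro i
          by_cases hi : i ∈ S <;> simp [hi, hc2]
        rw [Finset.sum_congr rfl fun i _ => this i, Finset.sum_ite_mem,
          Finset.univ_inter, Finset.sum_const, nsmul_eq_mul, hS.card_eq]
        field_simp
      rw [hval _ hu]
      have hxeq : (fun i => (if i ∈ S then c else 0) ^ 2)
          = fun i => if i ∈ S then (G.cliqueNum : ℝ)⁻¹ else 0 := by
        funext i
        by_cases hi : i ∈ S <;> simp [hi, hc2]
      rw [hxeq, Bq_clique_vec G S hS hω1, harith]
  · -- upper bound
    rintro y ⟨u, hu, rfl⟩
    rw [hval u hu, ← harith]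
    have hms := ms_main G (Finset.univ.filter (fun i => (fun i => u i ^ 2) i ≠ 0)).card
      (fun i => u i ^ 2) le_rfl (fun i => by positivity) hu
    linarith
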